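/- Unreachability of global optimum in one iteration: suppose ξ* - ξ ≤ β(η* - η)^2 where ξ* = ξ_{η*} is the mean-variance of an optimal policy with transition matrix P* and mean-variance reward f*, ξ is the current mean-variance with matrix P and reward f, and u is the current value function. Then the pseudo optimum satisfies ξ*_η - ξ = μ (I - αP*)^{-1}[ (1-α)(f*_η - f) + α(P* - P)u ] ≤ 0, and consequently there exists a state index x such that [(1-α) f*_η + α P* u](x) ≤ [(1-α) f + α P u](x). -/
import Mathlib


open Matrix

/-- `1 - α • Q` is invertible when `Q` is row-stochastic and `0 < α < 1`. -/
lemma aux_isUnit {n : ℕ} (Q : Matrix (Fin n) (Fin n) ℝ)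
    (hnn : ∀ i j, 0 ≤ Q i j) (hrow : ∀ i, ∑ j, Q i j = 1)
    {α : ℝ} (hα0 : 0 < α) (hα1 : α < 1) : IsUnit (1 - α • Q) := by
  rw [← Matrix.mulVec_injective_iff_isUnit]
  intro v w hvw
  have hd : (1 - α • Q) *ᵥ (v - w) = 0 := by
    rw [Matrix.mulVec_sub, hvw, sub_self]
  set d := v - w with hdef
  have hkey : ∀ i, d i = α * ∑ j, Q i j * d j := by
    intro i
    have h0 : ∑ j, ((1 : Matrix (Fin n) (Fin n) ℝ) i j - α * Q i j) * d j = 0 := by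
      have := congrFun hd i
      simpa [Matrix.mulVec, dotProduct, Matrix.sub_apply,
        Matrix.smul_apply] using this
    have h1 : ∑ j, ((1 : Matrix (Fin n) (Fin n) ℝ) i j) * d j = d i := by
      simp [Matrix.one_apply]
    have h2 : ∑ j, ((1 : Matrix (Fin n) (Fin n) ℝ) i j - α * Q i j) * d j
        = d i - α * ∑ j, Q i j * d j := by
      simp only [sub_mul, Finset.sum_sub_distrib, h1, Finset.mul_sum, mul_assoc]
    rw [h2] at h0
    linarith
  have hzero : ∀ i, d i = 0 := by
    intro i
    by_cases hn : Nonempty (Fin n)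
    · obtain ⟨m, _, hm⟩ := Finset.exists_max_image Finset.univ (fun j => |d j|)
        (Finset.univ_nonempty)
      have hbound : |d m| ≤ α * |d m| := by
        calc |d m| = |α * ∑ j, Q m j * d j| := by rw [hkey m]
          _ = α * |∑ j, Q m j * d j| := by rw [abs_mul, abs_of_pos hα0]
          _ ≤ α * ∑ j, |Q m j * d j| := by
              gcongr; exact Finset.abs_sum_le_sum_abs _ _
          _ ≤ α * ∑ j, Q m j * |d m| := by
              gcongr with j hj
              rw [abs_mul, abs_of_nonneg (hnn m j)]
              exact mul_le_mul_of_nonneg_left (hm j (Finset.mem_univ j)) (hnn m j)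
          _ = α * |d m| := by rw [← Finset.sum_mul, hrow m, one_mul]
      have hdm : |d m| = 0 := by nlinarith [abs_nonneg (d m)]
      have := hm i (Finset.mem_univ i)
      have := abs_nonneg (d i)
      have : |d i| = 0 := le_antisymm (by linarith [hm i (Finset.mem_univ i)]) (abs_nonneg _)
      exact abs_eq_zero.mp this
    · exact absurd ⟨i⟩ hn
  funext i
  have := hzero i
  simpa [hdef, sub_eq_zero] using this

/-- Unreachability of the global optimum in one iteration: if
`ξ* - ξ ≤ β(η* - η)²`, then the pseudo optimum satisfies
`ξ*_η - ξ = μ (I - αP*)⁻¹[(1-α)(f*_η - f) + α(P* - P)u] ≤ 0`, and consequently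
there is a state `x` with `[(1-α) f*_η + α P* u](x) ≤ [(1-α) f + α P u](x)`. -/
theorem stmt_13 {n : ℕ} (P Pstar : Matrix (Fin n) (Fin n) ℝ)
    (hPnn : ∀ i j, 0 ≤ P i j) (hProw : ∀ i, ∑ j, P i j = 1)
    (hPsnn : ∀ i j, 0 ≤ Pstar i j) (hPsrow : ∀ i, ∑ j, Pstar i j = 1)
    (μ : Fin n → ℝ) (hμnn : ∀ i, 0 ≤ μ i) (hμsum : ∑ i, μ i = 1)
    (α β : ℝ) (hα0 : 0 < α) (hα1 : α < 1) (hβ : 0 < β)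
    (f fstar : Fin n → ℝ) (u : Fin n → ℝ)
    (hu : u = (1 - α) • ((1 - α • P)⁻¹ *ᵥ f))
    (ξ ξstar η ηstar ξstarη : ℝ)
    (hξ : ξ = μ ⬝ᵥ u)
    (hξsη : ξstarη = ξstar - β * (ηstar - η) ^ 2)
    (hξsη' : ξstarη = μ ⬝ᵥ ((1 - α) • ((1 - α • Pstar)⁻¹ *ᵥ fstar)))
    (hgap : ξstar - ξ ≤ β * (ηstar - η) ^ 2) :
    (ξstarη - ξ =
      μ ⬝ᵥ ((1 - α • Pstar)⁻¹ *ᵥ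
        ((1 - α) • (fstar - f) + α • ((Pstar - P) *ᵥ u)))) ∧
    (ξstarη - ξ ≤ 0) ∧
    (∃ x : Fin n, ((1 - α) • fstar + α • (Pstar *ᵥ u)) x ≤
        ((1 - α) • f + α • (P *ᵥ u)) x) := by
  have hA : IsUnit (1 - α • P) := aux_isUnit P hPnn hProw hα0 hα1
  have hB : IsUnit (1 - α • Pstar) := aux_isUnit Pstar hPsnn hPsrow hα0 hα1
  have hAdet : IsUnit (1 - α • P).det := (Matrix.isUnit_iff_isUnit_det _).mp hA
  have hBdet : IsUnit (1 - α • Pstar).det := (Matrix.isUnit_iff_isUnit_det _).mp hB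
  -- A *ᵥ u = (1-α) • f
  have hAu : (1 - α • P) *ᵥ u = (1 - α) • f := by
    rw [hu, Matrix.mulVec_smul, Matrix.mulVec_mulVec, Matrix.mul_nonsing_inv _ hAdet,
      Matrix.one_mulVec]
  set v : Fin n → ℝ := (1 - α) • (fstar - f) + α • ((Pstar - P) *ᵥ u) with hv
  -- v = (1-α) • fstar - B *ᵥ u
  have hveq : v = (1 - α) • fstar - (1 - α • Pstar) *ᵥ u := by
    have hBu : (1 - α • Pstar) *ᵥ u = u - α • (Pstar *ᵥ u) := by
      rw [Matrix.sub_mulVec, Matrix.one_mulVec, Matrix.smul_mulVec]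
    have hAu' : u - α • (P *ᵥ u) = (1 - α) • f := by
      rw [← hAu, Matrix.sub_mulVec, Matrix.one_mulVec, Matrix.smul_mulVec]
    rw [hv, hBu, Matrix.sub_mulVec]
    funext i
    have := congrFun hAu' i
    simp only [Pi.add_apply, Pi.sub_apply, Pi.smul_apply, smul_eq_mul] at *
    linarith
  have hBinv : (1 - α • Pstar)⁻¹ *ᵥ v =
      (1 - α) • ((1 - α • Pstar)⁻¹ *ᵥ fstar) - u := by
    rw [hveq, Matrix.mulVec_sub, Matrix.mulVec_smul, Matrix.mulVec_mulVec,
      Matrix.nonsing_inv_mul _ hBdet, Matrix.one_mulVec]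
  have hpart1 : ξstarη - ξ = μ ⬝ᵥ ((1 - α • Pstar)⁻¹ *ᵥ v) := by
    rw [hBinv, dotProduct_sub, ← hξsη', ← hξ]
  have hpart2 : ξstarη - ξ ≤ 0 := by rw [hξsη]; linarith
  refine ⟨hpart1, hpart2, ?_⟩
  by_contra hcon
  push_neg at hcon
  -- every component of v is positive
  have hvpos : ∀ x, 0 < v x := by
    intro x
    have := hcon x
    simp only [hv, Pi.add_apply, Pi.sub_apply, Pi.smul_apply, smul_eq_mul,
      Matrix.sub_mulVec] at *
    linarith
  have hne : Nonempty (Fin n) := by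
    rcases Nat.eq_zero_or_pos n with h0 | hpos
    · exfalso; subst h0; simp at hμsum
    · exact ⟨⟨0, hpos⟩⟩
  set w : Fin n → ℝ := (1 - α • Pstar)⁻¹ *ᵥ v with hw
  have hBw : (1 - α • Pstar) *ᵥ w = v := by
    rw [hw, Matrix.mulVec_mulVec, Matrix.mul_nonsing_inv _ hBdet, Matrix.one_mulVec]
  -- w = α • Pstar w + v componentwise
  have hweq : ∀ i, w i = α * ∑ j, Pstar i j * w j + v i := by
    intro i
    have := congrFun hBw i
    simp only [Matrix.sub_mulVec, Matrix.one_mulVec, Matrix.smul_mulVec,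
      Pi.sub_apply, Pi.smul_apply, smul_eq_mul] at this
    have hmv : (Pstar *ᵥ w) i = ∑ j, Pstar i j * w j := rfl
    rw [hmv] at this
    linarith
  obtain ⟨m, _, hm⟩ := Finset.exists_min_image Finset.univ (fun j => w j)
    Finset.univ_nonempty
  have hwm : 0 < w m := by
    have h1 : w m = α * ∑ j, Pstar m j * w j + v m := hweq m
    have h2 : ∑ j, Pstar m j * w m ≤ ∑ j, Pstar m j * w j :=
      Finset.sum_le_sum fun j _ =>
        mul_le_mul_of_nonneg_left (hm j (Finset.mem_univ j)) (hPsnn m j)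
    have h3 : ∑ j, Pstar m j * w m = w m := by rw [← Finset.sum_mul, hPsrow m, one_mul]
    nlinarith [hvpos m]
  have hwpos : ∀ i, 0 < w i := fun i => lt_of_lt_of_le hwm (hm i (Finset.mem_univ i))
  have hdot : 0 < μ ⬝ᵥ w := by
    have h1 : ∀ i ∈ Finset.univ, μ i * w m ≤ μ i * w i := fun i _ =>
      mul_le_mul_of_nonneg_left (hm i (Finset.mem_univ i)) (hμnn i)
    have h2 : (w m : ℝ) ≤ ∑ i, μ i * w i := by
      calc (w m : ℝ) = ∑ i, μ i * w m := by rw [← Finset.sum_mul, hμsum, one_mul]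
        _ ≤ ∑ i, μ i * w i := Finset.sum_le_sum h1
    exact lt_of_lt_of_le hwm h2
  rw [hpart1] at hpart2
  exact absurd hpart2 (not_le.mpr hdot)
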